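/- Let q be a power of an odd prime with q ≡ 1 (mod 3) and q ≡ 1 (mod l) for an integer l ≥ 2 with l ≠ 3. Let S be a character of order l and χ₃ a character of order 3 of F_q. Then the number of affine points (x,y) ∈ F_q² on y^l = (x-1)(x²+1/3) equals q + q·Σ_{i=1}^{l-1} S^i(27/8)·( C(χ₃,S^i) + C(χ₃²,S^i) ), where C(A,B) = B(-1)·J(A,B̄)/q is Greene's binomial coefficient. -/

import Mathlib

open Finset

/-- The Jacobi sum of two multiplicative characters. -/
noncomputable def jacSum {F : Type*} [Field F] [Fintype F] (A B : MulChar F ℂ) : ℂ :=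
  ∑ x : F, A x * B (1 - x)

/-- Greene's binomial coefficient `C(A,B) = B(-1)/q · J(A, B⁻¹)`. -/
noncomputable def greeneBinom {F : Type*} [Field F] [Fintype F] (A B : MulChar F ℂ) : ℂ :=
  B (-1) / (Fintype.card F : ℂ) * jacSum A B⁻¹

section Aux

variable {F : Type*} [Field F] [Fintype F] [DecidableEq F]

private lemma jacSum_eq' : ∀ (A B : MulChar F ℂ), jacSum A B = jacobiSum A B := fun _ _ => rfl

private lemma card_pow_char' (p : ℕ) (hp : p.Prime) (h : (p : F) = 0) :
    ∃ n : ℕ, 0 < n ∧ Fintype.card F = p ^ n := by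
  have h1 : ringChar F ∣ p := (ringChar.spec F p).mp h
  have hrc : ringChar F = p := by
    rcases (Nat.Prime.eq_one_or_self_of_dvd hp _ h1) with h2 | h2
    · exact absurd h2 CharP.ringChar_ne_one
    · exact h2
  have : CharP F p := hrc ▸ ringChar.charP F
  obtain ⟨n, hn⟩ := FiniteField.card F p
  exact ⟨n, n.2, hn.2⟩

private lemma count_pow' (n : ℕ) (hn : 0 < n) (hdvd : n ∣ Fintype.card F - 1)
    (χ : MulChar F ℂ) (hχ : orderOf χ = n) (a : F) :
    ((univ.filter fun y : F => y ^ n = a).card : ℂ) =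
      (if a = 0 then 1 else 0) + ∑ j ∈ range n, (χ ^ j) a := by
  by_cases ha : a = 0
  · subst ha
    have h1 : (univ.filter fun y : F => y ^ n = 0) = {0} := by
      ext y
      simp [pow_eq_zero_iff hn.ne']
    rw [h1]
    have h2 : ∀ j ∈ range n, (χ ^ j) (0 : F) = 0 := fun j _ =>
      MulChar.map_nonunit _ (by simp)
    rw [Finset.sum_congr rfl h2]
    simp
  · rw [if_neg ha, zero_add]
    have hau : IsUnit a := isUnit_iff_ne_zero.mpr ha
    have haeq : (hau.unit : F) = a := hau.unit_spec
    have hrhs : ∀ j ∈ range n, (χ ^ j) a = (χ a) ^ j := by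
      intro j _
      rw [← haeq, MulChar.pow_apply_coe]
    rw [Finset.sum_congr rfl hrhs]
    set z := χ a with hz
    have hzn : z ^ n = 1 := by
      rw [hz, ← haeq, ← MulChar.pow_apply_coe, ← hχ, pow_orderOf_eq_one,
        MulChar.one_apply_coe]
    by_cases hz1 : z = 1
    · obtain ⟨g, hg⟩ := IsCyclic.exists_generator (α := Fˣ)
      have hog : orderOf g = Fintype.card F - 1 := by
        rw [orderOf_eq_card_of_forall_mem_zpowers hg, Nat.card_eq_fintype_card,
          Fintype.card_units]
      have hcard1 : 0 < Fintype.card F - 1 := by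
        have := Fintype.one_lt_card (α := F); omega
      set m := (Fintype.card F - 1) / n with hm
      have hmdvd : m ∣ Fintype.card F - 1 := Nat.div_dvd_of_dvd hdvd
      have hζord : orderOf (g ^ m) = n := by
        rw [orderOf_pow, hog, Nat.gcd_eq_right hmdvd, Nat.div_div_self hdvd hcard1.ne']
      have hprim : IsPrimitiveRoot ((g ^ m : Fˣ) : F) n := by
        have h1 := IsPrimitiveRoot.orderOf (g ^ m)
        rw [hζord] at h1
        exact IsPrimitiveRoot.coe_units_iff.mpr h1
      obtain ⟨mm, hmm⟩ : ∃ k : ℕ, g ^ k = hau.unit := by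
        have h2 := hg hau.unit
        rw [← mem_powers_iff_mem_zpowers] at h2
        exact (Submonoid.mem_powers_iff _ _).mp h2
      set w := χ ((g : Fˣ) : F) with hw
      have hwn : w ^ n = 1 := by
        rw [hw, ← MulChar.pow_apply_coe, ← hχ, pow_orderOf_eq_one, MulChar.one_apply_coe]
      have hχd : χ ^ (orderOf w) = 1 := by
        apply MulChar.ext
        intro u
        obtain ⟨k, hk⟩ : ∃ k : ℕ, g ^ k = u := by
          have h2 := hg u
          rw [← mem_powers_iff_mem_zpowers] at h2
          exact (Submonoid.mem_powers_iff _ _).mp h2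
        rw [MulChar.pow_apply_coe, MulChar.one_apply_coe, ← hk, Units.val_pow_eq_pow_val,
          map_pow, ← hw, ← pow_mul, mul_comm, pow_mul, pow_orderOf_eq_one, one_pow]
      have hnw : n = orderOf w :=
        Nat.dvd_antisymm (hχ ▸ orderOf_dvd_of_pow_eq_one hχd) (orderOf_dvd_of_pow_eq_one hwn)
      have hnm : n ∣ mm := by
        rw [hnw]
        apply orderOf_dvd_of_pow_eq_one
        rw [hw, ← map_pow, ← Units.val_pow_eq_pow_val, hmm, haeq, ← hz, hz1]
      obtain ⟨k, hk⟩ := hnm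
      set α : F := ((g ^ k : Fˣ) : F) with hαdef
      have hα : α ^ n = a := by
        rw [hαdef, ← Units.val_pow_eq_pow_val, ← pow_mul, mul_comm, ← hk, hmm, haeq]
      have hα0 : α ≠ 0 := Units.ne_zero _
      have hcard : (univ.filter fun y : F => y ^ n = a).card = n := by
        have hcard2 : (univ.filter fun y : F => y ^ n = a).card
            = (Polynomial.nthRootsFinset n (1 : F)).card := by
          apply Finset.card_nbij' (i := fun y => α⁻¹ * y) (j := fun y => α * y)
          · intro y hy
            rw [Finset.mem_coe, Finset.mem_filter] at hy
            rw [Finset.mem_coe, Polynomial.mem_nthRootsFinset hn (1 : F), mul_pow, hy.2, inv_pow, hα,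
              inv_mul_cancel₀ ha]
          · intro y hy
            rw [Finset.mem_coe, Polynomial.mem_nthRootsFinset hn (1 : F)] at hy
            rw [Finset.mem_coe, Finset.mem_filter]
            refine ⟨Finset.mem_univ _, ?_⟩
            rw [mul_pow, hα, hy, mul_one]
          · intro y _
            field_simp
          · intro y _
            field_simp
        rw [hcard2, hprim.card_nthRootsFinset]
      rw [hcard]
      simp [hz1]
    · have hempty : (univ.filter fun y : F => y ^ n = a) = ∅ := by
        rw [Finset.filter_eq_empty_iff]
        intro y _
        intro hy
        apply hz1
        have hy0 : y ≠ 0 := by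
          intro h; apply ha; rw [← hy, h, zero_pow hn.ne']
        rw [hz, ← hy, map_pow, ← MulChar.pow_apply' χ hn.ne', ← hχ, pow_orderOf_eq_one,
          MulChar.one_apply (isUnit_iff_ne_zero.mpr hy0)]
      rw [hempty, geom_sum_eq hz1, hzn, sub_self, zero_div]
      simp

private lemma subst_sum' (h2 : (2 : F) ≠ 0) (h3 : (3 : F) ≠ 0) (T : MulChar F ℂ) :
    ∑ x : F, T ((x - 1) * (x ^ 2 + (3 : F)⁻¹)) =
      T ((8 : F) / 27) * T (-1) * ∑ v : F, T (1 - v ^ 3) := by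
  have hbij : Function.Bijective (fun v : F => (2 * v + 1) / 3) := by
    rw [Function.bijective_iff_has_inverse]
    refine ⟨fun x => (3 * x - 1) / 2, fun v => ?_, fun x => ?_⟩
    · field_simp; ring
    · field_simp; ring
  rw [← Function.Bijective.sum_comp hbij (fun x => T ((x - 1) * (x ^ 2 + (3 : F)⁻¹)))]
  rw [Finset.mul_sum]
  apply Finset.sum_congr rfl
  intro v _
  have harg : ((2 * v + 1) / 3 - 1) * (((2 * v + 1) / 3) ^ 2 + (3 : F)⁻¹)
      = ((8 : F) / 27) * (-1) * (1 - v ^ 3) := by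
    have h27 : (27 : F) ≠ 0 := by
      have : (27 : F) = 3 ^ 3 := by norm_num
      rw [this]; exact pow_ne_zero _ h3
    field_simp
    ring
  simp only [harg, map_mul, mul_assoc]

private lemma cubic_sum' (hdvd3 : 3 ∣ Fintype.card F - 1)
    (χ₃ : MulChar F ℂ) (hχ₃ : orderOf χ₃ = 3)
    (T : MulChar F ℂ) (hT : T ≠ 1) :
    ∑ v : F, T (1 - v ^ 3) = jacSum χ₃ T + jacSum (χ₃ ^ 2) T := by
  have h1 : ∑ v : F, T (1 - v ^ 3)
      = ∑ t : F, ∑ v ∈ univ.filter (fun v : F => v ^ 3 = t), T (1 - v ^ 3) :=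
    (Finset.sum_fiberwise univ (fun v : F => v ^ 3) (fun v => T (1 - v ^ 3))).symm
  have h2 : ∀ t : F, ∑ v ∈ univ.filter (fun v : F => v ^ 3 = t), T (1 - v ^ 3)
      = ((univ.filter fun v : F => v ^ 3 = t).card : ℂ) * T (1 - t) := by
    intro t
    have hcg : ∀ v ∈ univ.filter (fun v : F => v ^ 3 = t), T (1 - v ^ 3) = T (1 - t) :=
      fun v hv => by rw [(Finset.mem_filter.mp hv).2]
    rw [Finset.sum_congr rfl hcg, Finset.sum_const, nsmul_eq_mul]
  rw [h1, Finset.sum_congr rfl (fun t _ => h2 t)]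
  have h3 : ∀ t : F, ((univ.filter fun v : F => v ^ 3 = t).card : ℂ) * T (1 - t)
      = (if t = 0 then 1 else 0) * T (1 - t)
        + ∑ j ∈ range 3, (χ₃ ^ j) t * T (1 - t) := by
    intro t
    rw [count_pow' 3 (by norm_num) hdvd3 χ₃ hχ₃ t, add_mul, Finset.sum_mul]
  rw [Finset.sum_congr rfl (fun t _ => h3 t), Finset.sum_add_distrib]
  have h4 : ∑ t : F, (if t = 0 then (1 : ℂ) else 0) * T (1 - t) = 1 := by
    rw [Finset.sum_eq_single 0]
    · simp
    · intro b _ hb; rw [if_neg hb, zero_mul]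
    · intro h; exact absurd (Finset.mem_univ 0) h
  rw [h4, Finset.sum_comm]
  have h5 : ∀ j ∈ range 3, ∑ t : F, (χ₃ ^ j) t * T (1 - t) = jacSum (χ₃ ^ j) T :=
    fun j _ => rfl
  rw [Finset.sum_congr rfl h5]
  rw [Finset.sum_range_succ, Finset.sum_range_succ, Finset.sum_range_one, pow_zero, pow_one]
  rw [jacSum_eq' 1 T, jacobiSum_one_nontrivial hT]
  ring

end Aux

/-- If `q ≡ 1 (mod 3)` and `q ≡ 1 (mod l)`, `l ≠ 3`, then the number of affine points on
`y^l = (x-1)(x²+1/3)` is `q + q·Σ_{i=1}^{l-1} S^i(27/8)(C(χ₃,S^i)+C(χ₃²,S^i))`. -/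
theorem stmt9 (F : Type*) [Field F] [Fintype F] [DecidableEq F]
    (hodd : Odd (Fintype.card F))
    (l : ℕ) (hl : 2 ≤ l) (hl3 : l ≠ 3)
    (hq3 : Fintype.card F % 3 = 1) (hql : Fintype.card F % l = 1)
    (S : MulChar F ℂ) (hS : orderOf S = l)
    (χ₃ : MulChar F ℂ) (hχ₃ : orderOf χ₃ = 3) :
    ((Finset.univ.filter
        (fun p : F × F => p.2 ^ l = (p.1 - 1) * (p.1 ^ 2 + (3 : F)⁻¹))).card : ℂ) =
      (Fintype.card F : ℂ) + (Fintype.card F : ℂ) *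
        ∑ i ∈ Finset.Icc 1 (l - 1),
          (S ^ i) ((27 : F) / 8) *
            (greeneBinom χ₃ (S ^ i) + greeneBinom (χ₃ ^ 2) (S ^ i)) := by
  set q := Fintype.card F with hqdef
  have hq2 : 2 ≤ q := Fintype.one_lt_card
  -- characteristic facts
  have h2 : (2 : F) ≠ 0 := by
    intro h
    obtain ⟨n, hn0, hn⟩ := card_pow_char' 2 Nat.prime_two h
    rw [← hqdef] at hn
    exact (Nat.not_odd_iff_even.mpr ⟨2 ^ (n - 1), by
      rw [hn, ← two_mul, ← pow_succ']; congr 1; omega⟩) hodd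
  have h3 : (3 : F) ≠ 0 := by
    intro h
    obtain ⟨n, hn0, hn⟩ := card_pow_char' 3 Nat.prime_three h
    rw [← hqdef] at hn
    rw [hn, Nat.pow_mod, Nat.mod_self, Nat.zero_pow hn0, Nat.zero_mod] at hq3
    exact absurd hq3 (by norm_num)
  have hdvd3 : 3 ∣ q - 1 := by
    have h := Nat.div_add_mod q 3
    exact ⟨q / 3, by omega⟩
  have hdvdl : l ∣ q - 1 := by
    have h := Nat.div_add_mod q l
    exact ⟨q / l, by omega⟩
  have hl0 : 0 < l := by omega
  -- nontriviality of S^j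
  have hSj : ∀ j ∈ Icc 1 (l - 1), S ^ j ≠ 1 := by
    intro j hj hSj1
    rw [Finset.mem_Icc] at hj
    have := Nat.le_of_dvd (by omega) (hS ▸ orderOf_dvd_of_pow_eq_one hSj1)
    omega
  -- Step A: fiberwise count
  have hA : (Finset.univ.filter
      (fun p : F × F => p.2 ^ l = (p.1 - 1) * (p.1 ^ 2 + (3 : F)⁻¹))).card
      = ∑ x : F, (univ.filter fun y : F => y ^ l = (x - 1) * (x ^ 2 + (3 : F)⁻¹)).card := by
    rw [Finset.card_filter]
    rw [Fintype.sum_prod_type]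
    exact Finset.sum_congr rfl fun x _ => (Finset.card_filter _ _).symm
  rw [hA]
  push_cast
  -- Step B: per-x character expansion
  have hB : ∀ x : F, ((univ.filter fun y : F =>
      y ^ l = (x - 1) * (x ^ 2 + (3 : F)⁻¹)).card : ℂ)
      = 1 + ∑ j ∈ Icc 1 (l - 1), (S ^ j) ((x - 1) * (x ^ 2 + (3 : F)⁻¹)) := by
    intro x
    rw [count_pow' l hl0 hdvdl S hS]
    set a := (x - 1) * (x ^ 2 + (3 : F)⁻¹) with hadef
    have hins : range l = insert 0 (Icc 1 (l - 1)) := by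
      ext j; simp only [Finset.mem_range, Finset.mem_insert, Finset.mem_Icc]; omega
    rw [hins, Finset.sum_insert (by simp)]
    rw [pow_zero]
    by_cases ha : a = 0
    · rw [if_pos ha, ha, MulChar.map_nonunit _ (by simp)]
      ring
    · rw [if_neg ha, MulChar.one_apply (isUnit_iff_ne_zero.mpr ha)]
      ring
  rw [Finset.sum_congr rfl fun x _ => hB x, Finset.sum_add_distrib, Finset.sum_const,
    Finset.card_univ, nsmul_eq_mul, mul_one, Finset.sum_comm]
  congr 1
  rw [Finset.mul_sum]
  -- Step C: evaluate each inner sum and reindex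
  apply Finset.sum_nbij' (i := fun j => l - j) (j := fun j => l - j)
  · intro j hj
    rw [Finset.mem_Icc] at hj ⊢
    omega
  · intro j hj
    rw [Finset.mem_Icc] at hj ⊢
    omega
  · intro j hj
    rw [Finset.mem_Icc] at hj
    omega
  · intro j hj
    rw [Finset.mem_Icc] at hj
    omega
  · intro j hj
    -- main per-index identity
    rw [subst_sum' h2 h3 (S ^ j), cubic_sum' hdvd3 χ₃ hχ₃ (S ^ j) (hSj j hj)]
    have hq0 : (q : ℂ) ≠ 0 := Nat.cast_ne_zero.mpr (by omega)
    have hinv : (S ^ (l - j))⁻¹ = S ^ j := by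
      apply inv_eq_of_mul_eq_one_right
      rw [← pow_add]
      have : l - j + j = l := by rw [Finset.mem_Icc] at hj; omega
      rw [this, ← hS, pow_orderOf_eq_one]
    have hSlj : S ^ (l - j) = (S ^ j)⁻¹ := by
      rw [← hinv, inv_inv]
    rw [greeneBinom, greeneBinom, hinv, hSlj, MulChar.inv_apply', MulChar.inv_apply',
      inv_neg, inv_one, inv_div]
    field_simp
    ring
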